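/- Let G be a graph with at least one edge, adjacency matrix eigenvalues λ₁ ≥ … ≥ λ_n, and chromatic number χ(G). Then χ(G) ≥ 1 − λ₁/λ_n. -/

import Mathlib

open Finset Matrix

lemma rayleigh_lower {V : Type*} [Fintype V] [DecidableEq V] {A : Matrix V V ℝ}
    (hA : A.IsHermitian) (lamn : ℝ) (hnmin : ∀ i, lamn ≤ hA.eigenvalues i)
    (y : V → ℝ) : lamn * (y ⬝ᵥ y) ≤ y ⬝ᵥ (A *ᵥ y) := by
  set U : Matrix V V ℝ := (hA.eigenvectorUnitary : Matrix V V ℝ) with hU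
  have hstar : star U = Uᵀ := by
    ext i j; simp [Matrix.conjTranspose_apply]
  have hUU : U * Uᵀ = 1 := by
    rw [← hstar]; exact (Matrix.mem_unitaryGroup_iff).mp hA.eigenvectorUnitary.2
  set w : V → ℝ := Uᵀ *ᵥ y with hw
  have h1 : y ⬝ᵥ (A *ᵥ y) = ∑ i, hA.eigenvalues i * (w i)^2 := by
    conv_lhs => rw [hA.spectral_theorem]
    rw [Unitary.conjStarAlgAut_apply, hstar, ← mulVec_mulVec, ← mulVec_mulVec, dotProduct_mulVec, ← mulVec_transpose]
    simp only [← hw, mulVec_diagonal, dotProduct]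
    apply Finset.sum_congr rfl
    intro i _
    simp [Function.comp]; ring
  have h2 : y ⬝ᵥ y = ∑ i, (w i)^2 := by
    have : (∑ i, (w i)^2) = w ⬝ᵥ w := by simp [dotProduct, sq]
    rw [this, hw, dotProduct_mulVec, vecMul_transpose, mulVec_mulVec, hUU, one_mulVec]
  rw [h1, h2, Finset.mul_sum]
  exact Finset.sum_le_sum fun i _ =>
    mul_le_mul_of_nonneg_right (hnmin i) (sq_nonneg _)

/-- Hoffman's bound: if `G` has at least one edge, then
`χ(G) ≥ 1 − λ₁/λ_n`, where `lam1` and `lamn` are the largest and smallest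
adjacency eigenvalues. -/
theorem hoffman_chromatic_bound
    {V : Type*} [Fintype V] [DecidableEq V]
    (G : SimpleGraph V) [DecidableRel G.Adj]
    (hedge : ∃ u v : V, G.Adj u v)
    (hA : (G.adjMatrix ℝ).IsHermitian)
    (lam1 lamn : ℝ)
    (h1mem : ∃ i, hA.eigenvalues i = lam1) (h1max : ∀ i, hA.eigenvalues i ≤ lam1)
    (hnmem : ∃ i, hA.eigenvalues i = lamn) (hnmin : ∀ i, lamn ≤ hA.eigenvalues i)
    (chi : ℕ) (hchi : G.chromaticNumber = (chi : ℕ∞)) :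
    1 - lam1 / lamn ≤ (chi : ℝ) := by
  obtain ⟨u, v, huv⟩ := hedge
  -- a proper coloring with `chi` colors
  have hcol : G.Colorable chi := by
    have h := G.colorable_chromaticNumber_of_fintype
    rwa [hchi, ENat.toNat_coe] at h
  let C : G.Coloring (Fin chi) := hcol.some
  have hCuv : C u ≠ C v := C.valid huv
  have hchi2 : 2 ≤ chi := by
    have : 1 < Fintype.card (Fin chi) :=
      Fintype.one_lt_card_iff_nontrivial.mpr ⟨⟨C u, C v, hCuv⟩⟩
    simp at this; omega
  set A : Matrix V V ℝ := G.adjMatrix ℝ with hAdef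
  -- lamn ≤ -1
  have hlamn : lamn ≤ -1 := by
    set y : V → ℝ := fun w => (if w = u then (1:ℝ) else 0) - (if w = v then 1 else 0) with hy
    have hne := huv.ne
    have h1 : y ⬝ᵥ y = 2 := by
      simp only [dotProduct, hy]
      have : ∀ w : V, ((if w = u then (1:ℝ) else 0) - (if w = v then 1 else 0)) *
          ((if w = u then (1:ℝ) else 0) - (if w = v then 1 else 0))
          = (if w = u then (1:ℝ) else 0) + (if w = v then 1 else 0) := by
        intro w
        by_cases h1 : w = u <;> by_cases h2 : w = v <;>
          simp [h1, h2] <;> simp_all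
      rw [Finset.sum_congr rfl fun w _ => this w, Finset.sum_add_distrib]
      simp
      norm_num
    have h2 : y ⬝ᵥ (A *ᵥ y) = -2 := by
      simp only [dotProduct, Matrix.mulVec, dotProduct, hy]
      have expand : ∀ p q : V,
          ((if p = u then (1:ℝ) else 0) - (if p = v then 1 else 0)) *
          (A p q * ((if q = u then (1:ℝ) else 0) - (if q = v then 1 else 0)))
          = (if p = u then (1:ℝ) else 0) * (if q = u then (1:ℝ) else 0) * A p q
            - (if p = u then (1:ℝ) else 0) * (if q = v then (1:ℝ) else 0) * A p q
            - (if p = v then (1:ℝ) else 0) * (if q = u then (1:ℝ) else 0) * A p q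
            + (if p = v then (1:ℝ) else 0) * (if q = v then (1:ℝ) else 0) * A p q := by
        intro p q; ring
      calc ∑ p, ((if p = u then (1:ℝ) else 0) - (if p = v then 1 else 0)) *
            ∑ q, (A p q * ((if q = u then (1:ℝ) else 0) - (if q = v then 1 else 0)))
          = ∑ p, ∑ q, ((if p = u then (1:ℝ) else 0) - (if p = v then 1 else 0)) *
            (A p q * ((if q = u then (1:ℝ) else 0) - (if q = v then 1 else 0))) := by
            simp [Finset.mul_sum]
        _ = A u u - A u v - A v u + A v v := by
            rw [Finset.sum_congr rfl fun p _ => Finset.sum_congr rfl fun q _ => expand p q]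
            simp [Finset.sum_add_distrib, Finset.sum_sub_distrib, Finset.sum_ite_eq',
              ite_mul, zero_mul, one_mul]
        _ = -2 := by
            simp [hAdef, huv, huv.symm, G.ne_of_adj huv]
            norm_num
    have := rayleigh_lower hA lamn hnmin y
    rw [h1, h2] at this
    linarith
  -- top eigenvector
  obtain ⟨i₀, hi₀⟩ := h1mem
  set x : V → ℝ := ⇑(hA.eigenvectorBasis i₀) with hx
  have hx1 : A *ᵥ x = lam1 • x := by
    rw [← hi₀]; exact hA.mulVec_eigenvectorBasis i₀
  have hxnorm : ∑ w, x w ^ 2 = 1 := by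
    have hn : ‖hA.eigenvectorBasis i₀‖ = 1 := hA.eigenvectorBasis.orthonormal.1 i₀
    have := congrArg (· ^ 2) hn
    rw [EuclideanSpace.norm_eq] at this
    simp only [Real.norm_eq_abs, sq_abs, one_pow] at this
    rw [Real.sq_sqrt (by positivity)] at this
    simpa [hx, sq_abs] using this
  set K : ℝ := (chi : ℝ) with hKdef
  have hK2 : (2:ℝ) ≤ K := by rw [hKdef]; exact_mod_cast hchi2
  have hK0 : (0:ℝ) < K := by linarith
  set z : Fin chi → V → ℝ := fun t w => ((if C w = t then (1:ℝ) else 0) - 1/K) * x w with hz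
  -- key identity
  have key : ∀ p q : V, ∑ t, z t p * z t q =
      ((if C p = C q then (1:ℝ) else 0) - 1/K) * (x p * x q) := by
    intro p q
    have expand : ∀ t : Fin chi, z t p * z t q =
        ((if C p = t then (1:ℝ) else 0) * (if C q = t then 1 else 0)) * (x p * x q)
        - (1/K) * ((if C p = t then (1:ℝ) else 0) * (x p * x q))
        - (1/K) * ((if C q = t then (1:ℝ) else 0) * (x p * x q))
        + (1/K)^2 * (x p * x q) := by
      intro t; simp only [hz]; ring
    rw [Finset.sum_congr rfl fun t _ => expand t]
    have e1 : ∑ t : Fin chi, ((if C p = t then (1:ℝ) else 0) * (if C q = t then 1 else 0))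
        * (x p * x q) = (if C p = C q then (1:ℝ) else 0) * (x p * x q) := by
      rw [← Finset.sum_mul]
      congr 1
      simp only [ite_mul, one_mul, zero_mul]
      rw [Finset.sum_ite_eq]
      simp [eq_comm]
    have e2 : ∑ t : Fin chi, (1/K) * ((if C p = t then (1:ℝ) else 0) * (x p * x q))
        = (1/K) * (x p * x q) := by
      rw [← Finset.mul_sum, ← Finset.sum_mul, Finset.sum_ite_eq]
      simp
    have e3 : ∑ t : Fin chi, (1/K) * ((if C q = t then (1:ℝ) else 0) * (x p * x q))
        = (1/K) * (x p * x q) := by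
      rw [← Finset.mul_sum, ← Finset.sum_mul, Finset.sum_ite_eq]
      simp
    have e4 : ∑ _t : Fin chi, ((1:ℝ)/K)^2 * (x p * x q) = (1/K) * (x p * x q) := by
      rw [Finset.sum_const, Finset.card_univ, Fintype.card_fin, nsmul_eq_mul]
      rw [hKdef]
      field_simp
    rw [Finset.sum_add_distrib, Finset.sum_sub_distrib, Finset.sum_sub_distrib, e1, e2, e3, e4]
    ring
  -- S2
  have hS2 : ∑ t, z t ⬝ᵥ z t = 1 - 1/K := by
    simp only [dotProduct]
    rw [Finset.sum_comm]
    have : ∀ w : V, ∑ t, z t w * z t w = (1 - 1/K) * x w ^ 2 := by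
      intro w
      rw [key w w]
      simp [sq]
    rw [Finset.sum_congr rfl fun w _ => this w, ← Finset.mul_sum, hxnorm, mul_one]
  -- S1
  have hS1 : ∑ t, z t ⬝ᵥ (A *ᵥ z t) = -(1/K) * lam1 := by
    have hterm : ∀ t, z t ⬝ᵥ (A *ᵥ z t) = ∑ p, ∑ q, z t p * A p q * z t q := by
      intro t
      simp only [dotProduct, Matrix.mulVec, dotProduct, Finset.mul_sum]
      exact Finset.sum_congr rfl fun p _ => Finset.sum_congr rfl fun q _ => by ring
    rw [Finset.sum_congr rfl fun t _ => hterm t]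
    rw [Finset.sum_comm]
    have inner : ∀ p : V, ∑ t : Fin chi, ∑ q, z t p * A p q * z t q
        = ∑ q, A p q * (((if C p = C q then (1:ℝ) else 0) - 1/K) * (x p * x q)) := by
      intro p
      rw [Finset.sum_comm]
      refine Finset.sum_congr rfl fun q _ => ?_
      rw [← key p q, Finset.mul_sum]
      exact Finset.sum_congr rfl fun t _ => by ring
    rw [Finset.sum_congr rfl fun p _ => inner p]
    have split : ∀ p q : V, A p q * (((if C p = C q then (1:ℝ) else 0) - 1/K) * (x p * x q))
        = -(1/K) * (x p * (A p q * x q)) := by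
      intro p q
      by_cases hadj : G.Adj p q
      · have : C p ≠ C q := C.valid hadj
        rw [if_neg this]
        ring
      · have : A p q = 0 := by simp [hAdef, hadj]
        simp [this]
    rw [Finset.sum_congr rfl fun p _ => Finset.sum_congr rfl fun q _ => split p q]
    have : ∑ p, ∑ q, -(1/K) * (x p * (A p q * x q)) = -(1/K) * (x ⬝ᵥ (A *ᵥ x)) := by
      simp only [dotProduct, Matrix.mulVec, dotProduct, Finset.mul_sum]
    rw [this, hx1]
    have : x ⬝ᵥ (lam1 • x) = lam1 * ∑ w, x w ^ 2 := by
      simp [dotProduct, Finset.mul_sum, sq]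
      exact Finset.sum_congr rfl fun w _ => by ring
    rw [this, hxnorm, mul_one]
  -- Rayleigh sum
  have hmain : lamn * (1 - 1/K) ≤ -(1/K) * lam1 := by
    calc lamn * (1 - 1/K) = lamn * ∑ t, z t ⬝ᵥ z t := by rw [hS2]
      _ = ∑ t, lamn * (z t ⬝ᵥ z t) := by rw [Finset.mul_sum]
      _ ≤ ∑ t, z t ⬝ᵥ (A *ᵥ z t) :=
          Finset.sum_le_sum fun t _ => rayleigh_lower hA lamn hnmin (z t)
      _ = -(1/K) * lam1 := hS1
  -- arithmetic
  have h' := mul_le_mul_of_nonneg_left hmain (le_of_lt hK0)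
  have e : K * (lamn * (1 - 1/K)) = lamn * (K - 1) := by
    field_simp
  have e2 : K * (-(1/K) * lam1) = -lam1 := by field_simp
  rw [e, e2] at h'
  have hfinal : lam1 ≤ (1 - K) * lamn := by nlinarith
  have hfrac : (1 - K) ≤ lam1 / lamn := by
    rw [le_div_iff_of_neg (by linarith : lamn < 0)]
    exact hfinal
  linarith
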